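/- Let (n,t) be a chart with n ≥ 1 and m ≥ 1. Let k_m be the number of orbits of t consisting of exactly 2m elements. Then the order of the automorphism group Aut(t) of the chart divides m·k_m. -/

import Mathlib

/-- Model of `X_n = {-n,...,-1,1,...,n}`: an element `±k` is encoded as
`(k mod n, sign)` with `true` meaning `+`.  Negation flips the sign. -/
abbrev Xn (n : ℕ) := ZMod n × Bool

/-- The negation map `k ↦ -k` on `X_n`. -/
def negX {n : ℕ} (p : Xn n) : Xn n := (p.1, !p.2)

/-- `(n, t)` is a chart: for every `k ∈ X_n` some integer power of `t` sends `k` to `-k`. -/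
def IsChart {n : ℕ} (t : Equiv.Perm (Xn n)) : Prop :=
  ∀ k : Xn n, ∃ s : ℤ, (t ^ s) k = negX k

/-- The circular permutation `σ_n : ±k ↦ ±(k+1)` (indices mod `n`). -/
def sigmaC (n : ℕ) : Equiv.Perm (Xn n) :=
  (Equiv.addRight (1 : ZMod n)).prodCongr (Equiv.refl Bool)

lemma sigmaC_apply {n : ℕ} (x : Xn n) : sigmaC n x = (x.1 + 1, x.2) := rfl

lemma sigmaC_zpow (n : ℕ) (s : ℤ) (x : Xn n) : ((sigmaC n ^ s) x) = (x.1 + s, x.2) := by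
  induction s using Int.induction_on generalizing x with
  | zero => simp
  | succ k ih =>
    rw [zpow_add_one, Equiv.Perm.mul_apply, ih, sigmaC_apply]
    push_cast
    rw [add_assoc, add_comm (1 : ZMod n)]
  | pred k ih =>
    have h : sigmaC n ((sigmaC n ^ (-(k : ℤ) - 1)) x) = (sigmaC n ^ (-(k : ℤ))) x := by
      rw [← Equiv.Perm.mul_apply, ← zpow_one_add]; ring_nf
    set y := (sigmaC n ^ (-(k : ℤ) - 1)) x with hy
    rw [sigmaC_apply, ih] at h
    rw [Prod.ext_iff] at h ⊢
    obtain ⟨h1, h2⟩ := h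
    refine ⟨?_, h2⟩
    simp only at h1 ⊢
    push_cast at h1 ⊢
    linear_combination h1

lemma sigmaC_zpow_eq_one (n : ℕ) (s : ℤ) (h : (s : ZMod n) = 0) : sigmaC n ^ s = 1 := by
  ext x
  · rw [sigmaC_zpow, h, add_zero]; rfl
  · rw [sigmaC_zpow]; rfl

lemma sigma_free {n : ℕ} (s : ℤ) (x : Xn n) (h : (sigmaC n ^ s) x = x) : sigmaC n ^ s = 1 := by
  apply sigmaC_zpow_eq_one
  have h1 := congrArg Prod.fst h
  rw [sigmaC_zpow] at h1
  simpa using h1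

lemma fiber_count {α β : Type*} [Finite α] [Finite β] (f : α → β) (m : ℕ)
    (h : ∀ b, Nat.card {a // f a = b} = m) : Nat.card α = m * Nat.card β := by
  classical
  cases nonempty_fintype α
  cases nonempty_fintype β
  rw [← Nat.card_congr (Equiv.sigmaFiberEquiv f)]
  rw [Nat.card_eq_fintype_card, Fintype.card_sigma, Nat.card_eq_fintype_card]
  have hb : ∀ b : β, Fintype.card {a // f a = b} = m := by
    intro b; rw [Fintype.card_eq_nat_card]; exact h b
  simp [hb, Finset.sum_const, mul_comm]

/-- orbit of `a` under `t` -/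
def Torb {n : ℕ} (t : Equiv.Perm (Xn n)) (a : Xn n) : Set (Xn n) :=
  {x | ∃ s : ℤ, (t ^ s) a = x}

lemma mem_Torb_self {n : ℕ} (t : Equiv.Perm (Xn n)) (a : Xn n) : a ∈ Torb t a := ⟨0, rfl⟩

lemma Torb_trans {n : ℕ} {t : Equiv.Perm (Xn n)} {a x y : Xn n}
    (h1 : x ∈ Torb t a) (h2 : y ∈ Torb t x) : y ∈ Torb t a := by
  obtain ⟨s, hs⟩ := h1; obtain ⟨u, hu⟩ := h2
  exact ⟨u + s, by rw [zpow_add, Equiv.Perm.mul_apply, hs, hu]⟩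

lemma Torb_symm {n : ℕ} {t : Equiv.Perm (Xn n)} {a x : Xn n}
    (h : x ∈ Torb t a) : a ∈ Torb t x := by
  obtain ⟨s, hs⟩ := h
  refine ⟨-s, ?_⟩
  rw [← hs, ← Equiv.Perm.mul_apply, ← zpow_add, neg_add_cancel, zpow_zero, Equiv.Perm.one_apply]

lemma Torb_eq_of_mem {n : ℕ} {t : Equiv.Perm (Xn n)} {a x : Xn n}
    (h : x ∈ Torb t a) : Torb t x = Torb t a := by
  ext y
  exact ⟨fun hy => Torb_trans h hy, fun hy => Torb_trans (Torb_symm h) hy⟩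

lemma neg_mem_Torb {n : ℕ} {t : Equiv.Perm (Xn n)} (ht : IsChart t) {a x : Xn n}
    (h : x ∈ Torb t a) : negX x ∈ Torb t a := by
  obtain ⟨s, hs⟩ := ht x
  exact Torb_trans h ⟨s, hs⟩

lemma Torb_map {n : ℕ} {t φ : Equiv.Perm (Xn n)} (h : Commute φ t) (a : Xn n) :
    Torb t (φ a) = φ '' Torb t a := by
  have h2 : ∀ (s : ℤ) (y : Xn n), φ ((t ^ s) y) = (t ^ s) (φ y) := by
    intro s y
    calc φ ((t ^ s) y) = (φ * t ^ s) y := rfl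
      _ = (t ^ s * φ) y := by rw [h.zpow_right s]
      _ = (t ^ s) (φ y) := rfl
  ext x
  constructor
  · rintro ⟨s, hs⟩
    exact ⟨(t ^ s) a, ⟨s, rfl⟩, by rw [h2]; exact hs⟩
  · rintro ⟨y, ⟨s, hsy⟩, rfl⟩
    exact ⟨s, by rw [← hsy, ← h2]⟩

lemma negX_invol {n : ℕ} : Function.Involutive (negX (n := n)) := by
  intro x; simp [negX]

lemma Torb_true_card {n : ℕ} [NeZero n] {t : Equiv.Perm (Xn n)} (ht : IsChart t)
    (a : Xn n) (m : ℕ) (h2m : (Torb t a).ncard = 2 * m) :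
    ({x | x ∈ Torb t a ∧ x.2 = true} : Set (Xn n)).ncard = m := by
  set O := Torb t a with hO
  set T : Set (Xn n) := {x | x ∈ O ∧ x.2 = true} with hT
  set F : Set (Xn n) := {x | x ∈ O ∧ x.2 = false} with hF
  have himg : negX '' T = F := by
    ext y
    constructor
    · rintro ⟨x, ⟨hxO, hx2⟩, rfl⟩
      exact ⟨neg_mem_Torb ht hxO, by simp [negX, hx2]⟩
    · rintro ⟨hyO, hy2⟩
      exact ⟨negX y, ⟨neg_mem_Torb ht hyO, by simp [negX, hy2]⟩, negX_invol y⟩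
  have hTF : F.ncard = T.ncard := by
    rw [← himg, Set.ncard_image_of_injective _ negX_invol.injective]
  have hunion : O = T ∪ F := by
    ext x
    constructor
    · intro hx
      cases hb : x.2
      · exact Or.inr ⟨hx, hb⟩
      · exact Or.inl ⟨hx, hb⟩
    · rintro (⟨hx, _⟩ | ⟨hx, _⟩) <;> exact hx
  have hdisj : Disjoint T F := by
    rw [Set.disjoint_left]
    rintro x ⟨_, hx2⟩ ⟨_, hx2'⟩
    rw [hx2] at hx2'; exact Bool.noConfusion hx2'
  have hcard : O.ncard = T.ncard + F.ncard := by
    rw [hunion, Set.ncard_union_eq hdisj (Set.toFinite _) (Set.toFinite _)]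
  rw [hcard, hTF] at h2m
  omega

lemma X'_invariant {n : ℕ} {t φ : Equiv.Perm (Xn n)} (hφ : ∃ s : ℤ, φ = sigmaC n ^ s)
    (hc : φ * t = t * φ) (m : ℕ) (x : Xn n)
    (hx : x.2 = true ∧ (Torb t x).ncard = 2 * m) :
    (φ x).2 = true ∧ (Torb t (φ x)).ncard = 2 * m := by
  obtain ⟨s, rfl⟩ := hφ
  constructor
  · rw [sigmaC_zpow]; exact hx.1
  · rw [Torb_map hc, Set.ncard_image_of_injective _ (Equiv.injective _)]
    exact hx.2


/-- `|Aut(t)|` divides `m·k_m`, where `k_m` is the number of orbits of `t`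
with exactly `2m` elements. -/
theorem stmt4 (n m : ℕ) (hn : 1 ≤ n) (hm : 1 ≤ m) (t : Equiv.Perm (Xn n)) (ht : IsChart t) :
    Set.ncard {φ : Equiv.Perm (Xn n) | (∃ s : ℤ, φ = sigmaC n ^ s) ∧ φ * t = t * φ} ∣
      m * Set.ncard {O : Set (Xn n) |
        (∃ a : Xn n, O = {x | ∃ s : ℤ, (t ^ s) a = x}) ∧ O.ncard = 2 * m} := by
  classical
  haveI : NeZero n := ⟨by omega⟩
  set G := Subgroup.zpowers (sigmaC n) ⊓ Subgroup.centralizer {t} with hG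
  set S : Set (Set (Xn n)) := {O : Set (Xn n) |
      (∃ a : Xn n, O = {x | ∃ s : ℤ, (t ^ s) a = x}) ∧ O.ncard = 2 * m} with hS
  set X' : Set (Xn n) := {x | x.2 = true ∧ (Torb t x).ncard = 2 * m} with hX'
  -- membership facts for G
  have hGmem : ∀ g : G, (∃ s : ℤ, (g : Equiv.Perm (Xn n)) = sigmaC n ^ s) ∧
      (g : Equiv.Perm (Xn n)) * t = t * (g : Equiv.Perm (Xn n)) := by
    intro g
    obtain ⟨h1, h2⟩ := Subgroup.mem_inf.mp g.2
    rw [Subgroup.mem_zpowers_iff] at h1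
    obtain ⟨k, hk⟩ := h1
    refine ⟨⟨k, hk.symm⟩, ?_⟩
    have := Subgroup.mem_centralizer_iff.mp h2 t rfl
    exact this.symm
  -- step 1 : the Aut set is the coercion of G
  have hAG : {φ : Equiv.Perm (Xn n) | (∃ s : ℤ, φ = sigmaC n ^ s) ∧ φ * t = t * φ}
      = (G : Set (Equiv.Perm (Xn n))) := by
    ext φ
    simp only [Set.mem_setOf_eq, SetLike.mem_coe, hG, Subgroup.mem_inf,
      Subgroup.mem_zpowers_iff, Subgroup.mem_centralizer_iff, Set.mem_singleton_iff]
    constructor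
    · rintro ⟨⟨s, rfl⟩, hc⟩
      exact ⟨⟨s, rfl⟩, fun h hh => by subst hh; exact hc.symm⟩
    · rintro ⟨⟨s, hs⟩, hc⟩
      exact ⟨⟨s, hs.symm⟩, (hc t rfl).symm⟩
  -- the G-orbit equivalence relation on X'
  let r : ↥X' → ↥X' → Prop := fun x y => ∃ g : G, (g : Equiv.Perm (Xn n)) y.val = x.val
  have hrefl : ∀ x, r x x := fun x => ⟨1, rfl⟩
  have hsymm : ∀ {x y}, r x y → r y x := by
    rintro x y ⟨g, hg⟩
    refine ⟨g⁻¹, ?_⟩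
    rw [← hg]
    simp
  have htrans : ∀ {x y z}, r x y → r y z → r x z := by
    rintro x y z ⟨g, hg⟩ ⟨g', hg'⟩
    refine ⟨g * g', ?_⟩
    rw [Subgroup.coe_mul, Equiv.Perm.mul_apply, hg', hg]
  let sd : Setoid ↥X' := ⟨r, hrefl, hsymm, htrans⟩
  -- step 2 : |G| divides |X'|
  have key2 : Nat.card ↥X' = Nat.card G * Nat.card (Quotient sd) := by
    apply fiber_count (fun x : ↥X' => Quotient.mk sd x)
    intro q
    obtain ⟨a, ha⟩ := Quotient.exists_rep q
    have hmemX : ∀ g : G, (g : Equiv.Perm (Xn n)) a.val ∈ X' := by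
      intro g
      exact X'_invariant (hGmem g).1 (hGmem g).2 m a.val a.2
    let f : G → {x : ↥X' // Quotient.mk sd x = q} := fun g =>
      ⟨⟨(g : Equiv.Perm (Xn n)) a.val, hmemX g⟩, by
        rw [← ha]
        exact Quotient.sound ⟨g, rfl⟩⟩
    have hbij : Function.Bijective f := by
      constructor
      · intro g₁ g₂ hgg
        have h0 : (g₁ : Equiv.Perm (Xn n)) a.val = (g₂ : Equiv.Perm (Xn n)) a.val := by
          exact congrArg (fun z => z.val.val) hgg
        have h1 : ((g₂⁻¹ * g₁ : G) : Equiv.Perm (Xn n)) a.val = a.val := by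
          rw [Subgroup.coe_mul, Equiv.Perm.mul_apply, h0, Subgroup.coe_inv,
            Equiv.Perm.inv_def, Equiv.symm_apply_apply]
        obtain ⟨⟨s, hs⟩, -⟩ := hGmem (g₂⁻¹ * g₁)
        rw [hs] at h1
        have h2 : ((g₂⁻¹ * g₁ : G) : Equiv.Perm (Xn n)) = 1 := by
          rw [hs, sigma_free s a.val h1]
        have h3 : g₂⁻¹ * g₁ = 1 := by
          exact_mod_cast Subtype.ext h2
        exact (inv_mul_eq_one.mp h3).symm
      · rintro ⟨x, hx⟩
        rw [← ha, Quotient.eq] at hx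
        obtain ⟨g, hg⟩ := hx
        exact ⟨g, Subtype.ext (Subtype.ext hg)⟩
    exact (Nat.card_congr (Equiv.ofBijective f hbij)).symm
  -- step 3 : |X'| = m * |S|
  have key1 : Nat.card ↥X' = m * Nat.card ↥S := by
    apply fiber_count (fun x : ↥X' => (⟨Torb t x.val, ⟨x.val, rfl⟩, x.2.2⟩ : ↥S))
    intro O
    obtain ⟨⟨a, haO⟩, hcO⟩ := O.2
    have haO' : O.val = Torb t a := haO
    have hcard : (Torb t a).ncard = 2 * m := by rw [← haO']; exact hcO
    let T : Set (Xn n) := {x | x ∈ Torb t a ∧ x.2 = true}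
    let e : {x : ↥X' // (⟨Torb t x.val, ⟨x.val, rfl⟩, x.2.2⟩ : ↥S) = O} ≃ ↥T :=
      { toFun := fun x => ⟨x.val.val, by
          have h1 : Torb t x.val.val = O.val := congrArg Subtype.val x.2
          rw [haO'] at h1
          exact ⟨h1 ▸ mem_Torb_self t x.val.val, x.val.2.1⟩⟩
        invFun := fun y =>
          ⟨⟨y.val, y.2.2, by rw [Torb_eq_of_mem y.2.1]; exact hcard⟩,
            Subtype.ext ((Torb_eq_of_mem y.2.1).trans haO'.symm)⟩
        left_inv := fun x => by apply Subtype.ext; apply Subtype.ext; rfl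
        right_inv := fun y => by apply Subtype.ext; rfl }
    rw [Nat.card_congr e, Nat.card_coe_set_eq]
    exact Torb_true_card ht a m hcard
  -- assemble
  rw [hAG, ← Nat.card_coe_set_eq]
  have hdvd : Nat.card G ∣ Nat.card ↥X' := key2 ▸ dvd_mul_right _ _
  rw [key1, Nat.card_coe_set_eq] at hdvd
  exact hdvd
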